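/- Let q be a prime power, f ∈ F_q[x] a monic irreducible polynomial of degree d, b and s positive integers, and A = ⊕_{i=1}^s C_f ∈ F_q^{n×n} with n = sd. Then P(A) = 1 − Q_{q^d, b, s}(0) ≥ 1 − Q_{q^d, b, 1}(0), where Q_{q^d, b, s}(0) is the probability that a sum of s independent uniformly random rank-one outer products u_i v_i^T with u_i, v_i ∈ (F_{q^d})^b is the zero matrix. -/

import Mathlib

open Matrix Polynomial

/-- `p` annihilates the matrix sequence `S`, i.e. `p(S) = 0`:
for every `k`, `∑ i, (coeff p i) • S (i + k) = 0`. -/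
def AnnPoly {F : Type} [Field F] {α β : Type} (p : Polynomial F)
    (S : ℕ → Matrix α β F) : Prop :=
  ∀ k : ℕ, (p.sum fun i a => a • S (i + k)) = 0

open scoped Classical in
/-- The minimal generating polynomial of a matrix sequence: the unique monic
polynomial annihilating `S` that divides every annihilator of `S`
(`0` if no such polynomial exists). -/
noncomputable def seqMinpoly {F : Type} [Field F] {α β : Type}
    (S : ℕ → Matrix α β F) : Polynomial F :=
  if h : ∃ p : Polynomial F, p.Monic ∧ AnnPoly p S ∧ ∀ g : Polynomial F, AnnPoly g S → p ∣ g
  then h.choose else 0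

namespace Ann

variable {F : Type} [Field F] {α β : Type} {S : ℕ → Matrix α β F}

theorem annPoly_iff_range {p : Polynomial F} {N : ℕ} (hN : p.natDegree < N) :
    AnnPoly p S ↔ ∀ k : ℕ, ∑ i ∈ Finset.range N, p.coeff i • S (i + k) = 0 := by
  unfold AnnPoly
  have key : ∀ k : ℕ, (p.sum fun i a => a • S (i + k))
      = ∑ i ∈ Finset.range N, p.coeff i • S (i + k) := fun k =>
    Polynomial.sum_over_range' p (f := fun i a => a • S (i + k)) (fun n => by simp) N hN
  constructor <;> intro h k
  · rw [← key k]; exact h k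
  · rw [key k]; exact h k

theorem annPoly_zero : AnnPoly (0 : Polynomial F) S := by
  intro k; simp [Polynomial.sum_zero_index]

theorem annPoly_add {p q : Polynomial F} (hp : AnnPoly p S) (hq : AnnPoly q S) :
    AnnPoly (p + q) S := by
  set N := max p.natDegree q.natDegree + 1 with hNdef
  have hpN : p.natDegree < N := Nat.lt_succ_of_le (le_max_left _ _)
  have hqN : q.natDegree < N := Nat.lt_succ_of_le (le_max_right _ _)
  have hpqN : (p + q).natDegree < N :=
    Nat.lt_succ_of_le ((Polynomial.natDegree_add_le p q).trans (le_refl _))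
  rw [annPoly_iff_range hpqN]
  rw [annPoly_iff_range hpN] at hp
  rw [annPoly_iff_range hqN] at hq
  intro k
  have : ∀ i ∈ Finset.range N, (p + q).coeff i • S (i + k)
      = p.coeff i • S (i + k) + q.coeff i • S (i + k) := by
    intro i _; rw [Polynomial.coeff_add, add_smul]
  rw [Finset.sum_congr rfl this, Finset.sum_add_distrib, hp k, hq k, add_zero]

theorem annPoly_smul (c : F) {p : Polynomial F} (hp : AnnPoly p S) :
    AnnPoly (c • p) S := by
  have h1 : (c • p).natDegree < p.natDegree + 1 :=
    Nat.lt_succ_of_le (Polynomial.natDegree_smul_le c p)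
  rw [annPoly_iff_range h1]
  rw [annPoly_iff_range (Nat.lt_succ_self _)] at hp
  intro k
  have : ∀ i ∈ Finset.range (p.natDegree + 1), (c • p).coeff i • S (i + k)
      = c • (p.coeff i • S (i + k)) := by
    intro i _; rw [Polynomial.coeff_smul, smul_eq_mul, mul_smul]
  rw [Finset.sum_congr rfl this, ← Finset.smul_sum, hp k, smul_zero]

theorem annPoly_X_mul {p : Polynomial F} (hp : AnnPoly p S) :
    AnnPoly (X * p) S := by
  have h1 : (X * p).natDegree < p.natDegree + 2 := by
    have hle : (X * p).natDegree ≤ (X : Polynomial F).natDegree + p.natDegree :=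
      Polynomial.natDegree_mul_le
    rw [Polynomial.natDegree_X] at hle
    omega
  rw [annPoly_iff_range h1]
  rw [annPoly_iff_range (Nat.lt_succ_self _)] at hp
  intro k
  rw [Finset.sum_range_succ']
  simp only [Polynomial.coeff_X_mul]
  have h0 : (X * p).coeff 0 = 0 := by
    rw [mul_comm, Polynomial.coeff_mul_X_zero]
  rw [h0, zero_smul, add_zero]
  have : ∀ i ∈ Finset.range (p.natDegree + 1),
      p.coeff i • S (i + 1 + k) = p.coeff i • S (i + (k + 1)) := by
    intro i _; have he : i + 1 + k = i + (k + 1) := by omega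
    rw [he]
  rw [Finset.sum_congr rfl this]
  exact hp (k + 1)

theorem annPoly_mul (p : Polynomial F) {g : Polynomial F} (hg : AnnPoly g S) :
    AnnPoly (p * g) S := by
  induction p using Polynomial.induction_on with
  | C a =>
      have : C a * g = a • g := by rw [Polynomial.smul_eq_C_mul]
      rw [this]; exact annPoly_smul a hg
  | add p q hp hq => rw [add_mul]; exact annPoly_add hp hq
  | monomial n a h =>
      have : C a * X ^ (n + 1) * g = X * (C a * X ^ n * g) := by ring
      rw [this]; exact annPoly_X_mul h

/-- The annihilator ideal of a sequence. -/
def annIdeal (S : ℕ → Matrix α β F) : Ideal (Polynomial F) where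
  carrier := {g | AnnPoly g S}
  zero_mem' := annPoly_zero
  add_mem' := annPoly_add
  smul_mem' := fun p g hg => by
    simpa [smul_eq_mul] using annPoly_mul p (g := g) hg

theorem mem_annIdeal_iff {g : Polynomial F} : g ∈ annIdeal S ↔ AnnPoly g S := Iff.rfl

theorem sum_one_eq (k : ℕ) :
    ((1 : Polynomial F).sum fun i a => a • S (i + k)) = S k := by
  have : (1 : Polynomial F) = C 1 := by simp
  rw [this, Polynomial.sum_C_index (by simp)]
  simp

theorem annPoly_one_iff : AnnPoly (1 : Polynomial F) S ↔ ∀ k, S k = 0 := by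
  unfold AnnPoly
  constructor <;> intro h k <;> have := h k <;> rw [sum_one_eq] at * <;> assumption

theorem eq_zero_of_annPoly_C {c : F} (hc : c ≠ 0) (h : AnnPoly (C c) S) :
    ∀ k, S k = 0 := by
  intro k
  have hk := h k
  rw [Polynomial.sum_C_index (by simp)] at hk
  simpa using (smul_eq_zero.mp hk).resolve_left hc

end Ann

section Setup

variable {F : Type} [Field F] {f : Polynomial F} [hfact : Fact (Irreducible f)]

noncomputable def B0 (f : Polynomial F) [hfact : Fact (Irreducible f)] :
    Module.Basis (Fin f.natDegree) F (AdjoinRoot f) :=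
  ((AdjoinRoot.powerBasis (hfact.out.ne_zero)).basis).reindex
    (finCongr (AdjoinRoot.powerBasis_dim _))

theorem B0_apply (j : Fin f.natDegree) : B0 f j = AdjoinRoot.root f ^ (j : ℕ) := by
  rw [B0, Module.Basis.reindex_apply, PowerBasis.coe_basis, AdjoinRoot.powerBasis_gen]
  congr 1

noncomputable instance [Fintype F] : Fintype (AdjoinRoot f) :=
  Module.fintypeOfFintype (B0 f)

instance : FiniteDimensional F (AdjoinRoot f) :=
  Module.Finite.of_basis (B0 f)

theorem card_adjoinRoot [Fintype F] :
    Fintype.card (AdjoinRoot f) = Fintype.card F ^ f.natDegree := by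
  rw [Module.card_fintype (B0 f), Fintype.card_fin]

/-- the distinguished nonzero functional -/
noncomputable def lam0 (f : Polynomial F) [hfact : Fact (Irreducible f)] :
    Module.Dual F (AdjoinRoot f) :=
  (B0 f).coord ⟨0, hfact.out.natDegree_pos⟩

/-- `K0 → Dual K0`, `α ↦ (β ↦ lam0 (α * β))`, as a linear map. -/
noncomputable def lamMul (f : Polynomial F) [hfact : Fact (Irreducible f)] :
    AdjoinRoot f →ₗ[F] Module.Dual F (AdjoinRoot f) where
  toFun α := (lam0 f).comp (LinearMap.mul F (AdjoinRoot f) α)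
  map_add' α β := by
    ext γ; simp [add_mul]
  map_smul' c α := by
    ext γ; simp [smul_mul_assoc]

theorem lamMul_apply (α β : AdjoinRoot f) : lamMul f α β = lam0 f (α * β) := rfl

theorem lam0_B0 (j : Fin f.natDegree) :
    lam0 f (B0 f j) = if j = ⟨0, hfact.out.natDegree_pos⟩ then 1 else 0 := by
  rw [lam0, Module.Basis.coord_apply, Module.Basis.repr_self]
  simp [Finsupp.single_apply]

theorem lamMul_bijective : Function.Bijective (lamMul (F := F) f) := by
  have hinj : Function.Injective (lamMul (F := F) f) := by
    rw [injective_iff_map_eq_zero]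
    intro α hα
    by_contra hne
    have h1 : ∀ β, lam0 f (α * β) = 0 := by
      intro β
      have := congrArg (fun g => g β) hα
      simpa [lamMul_apply] using this
    have h2 : lam0 f (B0 f ⟨0, hfact.out.natDegree_pos⟩) = 0 := by
      have := h1 (α⁻¹ * B0 f ⟨0, hfact.out.natDegree_pos⟩)
      rwa [← mul_assoc, mul_inv_cancel₀ hne, one_mul] at this
    rw [lam0_B0] at h2
    simp at h2
  refine ⟨hinj, ?_⟩
  rw [← LinearMap.injective_iff_surjective_of_finrank_eq_finrank
    (Subspace.dual_finrank_eq (K := F) (V := AdjoinRoot f)).symm]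
  exact hinj

/-- `lamMul` as a linear equivalence. -/
noncomputable def lamEquiv (f : Polynomial F) [hfact : Fact (Irreducible f)] :
    AdjoinRoot f ≃ₗ[F] Module.Dual F (AdjoinRoot f) :=
  LinearEquiv.ofBijective (lamMul f) lamMul_bijective

/-- the `lam0`-dual basis of the power basis -/
noncomputable def BD (f : Polynomial F) [hfact : Fact (Irreducible f)] :
    Module.Basis (Fin f.natDegree) F (AdjoinRoot f) :=
  ((B0 f).dualBasis).map (lamEquiv f).symm

theorem lam0_BD_mul_B0 (j j' : Fin f.natDegree) :
    lam0 f (BD f j * B0 f j') = if j' = j then 1 else 0 := by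
  have h1 : lamEquiv f (BD f j) = (B0 f).dualBasis j := by
    rw [BD, Module.Basis.map_apply, LinearEquiv.apply_symm_apply]
  have h2 : lamEquiv f (BD f j) (B0 f j') = lam0 f (BD f j * B0 f j') := rfl
  rw [← h2, h1, Module.Basis.dualBasis_apply_self]

theorem eq_zero_of_lam0_pow_mul {γ : AdjoinRoot f}
    (h : ∀ k : ℕ, lam0 f (AdjoinRoot.root f ^ k * γ) = 0) : γ = 0 := by
  by_contra hne
  have hB : ∀ j : Fin f.natDegree, lam0 f (B0 f j * γ) = 0 := by
    intro j; rw [B0_apply]; exact h j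
  have hall : ∀ α : AdjoinRoot f, lam0 f (α * γ) = 0 := by
    intro α
    have hsum : α = ∑ j, (B0 f).repr α j • B0 f j := ((B0 f).sum_repr α).symm
    rw [hsum, Finset.sum_mul, map_sum]
    refine Finset.sum_eq_zero fun j _ => ?_
    rw [smul_mul_assoc, _root_.map_smul, hB j, smul_zero]
  have h2 : lam0 f (B0 f ⟨0, hfact.out.natDegree_pos⟩) = 0 := by
    have := hall (B0 f ⟨0, hfact.out.natDegree_pos⟩ * γ⁻¹)
    rwa [mul_assoc, inv_mul_cancel₀ hne, mul_one] at this
  rw [lam0_B0] at h2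
  simp at h2

end Setup

section Pack

variable {F : Type} [Field F] {M : Type} [AddCommGroup M] [Module F M]

/-- Pack the rows of a `b × (dd·s)` matrix into a `b × s` matrix over the extension. -/
noncomputable def packU {dd b s : ℕ} (G : Module.Basis (Fin dd) F M)
    (U : Matrix (Fin b) (Fin dd × Fin s) F) : Matrix (Fin b) (Fin s) M :=
  Matrix.of fun a i => ∑ j, U a (j, i) • G j

/-- Pack the columns of a `(dd·s) × b` matrix into an `s × b` matrix over the extension. -/
noncomputable def packV {dd b s : ℕ} (G : Module.Basis (Fin dd) F M)
    (V : Matrix (Fin dd × Fin s) (Fin b) F) : Matrix (Fin s) (Fin b) M :=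
  Matrix.of fun i c => ∑ j, V (j, i) c • G j

theorem packU_bijective {dd b s : ℕ} (G : Module.Basis (Fin dd) F M) :
    Function.Bijective (packU (b := b) (s := s) G) := by
  constructor
  · intro U U' h
    funext a x
    have h1 := congrArg (fun P => G.repr (P a x.2) x.1) h
    simp only [packU, Matrix.of_apply] at h1
    have key : ∀ (W : Matrix (Fin b) (Fin dd × Fin s) F),
        G.repr (∑ j, W a (j, x.2) • G j) x.1 = W a (x.1, x.2) := by
      intro W
      rw [← Module.Basis.equivFun_symm_apply, ← Module.Basis.equivFun_apply,
        LinearEquiv.apply_symm_apply]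
    rw [key U, key U'] at h1
    simpa using h1
  · intro P
    refine ⟨Matrix.of fun a x => G.repr (P a x.2) x.1, ?_⟩
    funext a i
    simp only [packU, Matrix.of_apply]
    exact G.sum_repr (P a i)

theorem packV_bijective {dd b s : ℕ} (G : Module.Basis (Fin dd) F M) :
    Function.Bijective (packV (b := b) (s := s) G) := by
  constructor
  · intro V V' h
    funext x c
    have h1 := congrArg (fun P => G.repr (P x.2 c) x.1) h
    simp only [packV, Matrix.of_apply] at h1
    have key : ∀ (W : Matrix (Fin dd × Fin s) (Fin b) F),
        G.repr (∑ j, W (j, x.2) c • G j) x.1 = W (x.1, x.2) c := by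
      intro W
      rw [← Module.Basis.equivFun_symm_apply, ← Module.Basis.equivFun_apply,
        LinearEquiv.apply_symm_apply]
    rw [key V, key V'] at h1
    simpa using h1
  · intro P
    refine ⟨Matrix.of fun x c => G.repr (P x.2 c) x.1, ?_⟩
    funext i c
    simp only [packV, Matrix.of_apply]
    exact G.sum_repr (P i c)

end Pack

/-- `pmp F b A` : the fraction of pairs `(U, V)` for which the projected sequence
`(U * A^k * V)_k` has the same minimal polynomial as the sequence `(A^k)_k`. -/
noncomputable def pmp (F : Type) [Field F] [Fintype F] (b : ℕ)
    {ι : Type} [Fintype ι] [DecidableEq ι] (A : Matrix ι ι F) : ℚ :=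
  (Nat.card {UV : Matrix (Fin b) ι F × Matrix ι (Fin b) F //
      seqMinpoly (fun k => UV.1 * A ^ k * UV.2) = seqMinpoly (fun k => A ^ k)} : ℚ) /
  (Nat.card (Matrix (Fin b) ι F × Matrix ι (Fin b) F) : ℚ)

/-- The companion matrix of a monic polynomial `f` of degree `d`:
ones on the subdiagonal, last column `(-f_0, …, -f_{d-1})ᵀ`. -/
def companion {F : Type} [Field F] (d : ℕ) (f : Polynomial F) :
    Matrix (Fin d) (Fin d) F :=
  Matrix.of fun i j => (if (i : ℕ) = (j : ℕ) + 1 then 1 else 0) +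
    (if (j : ℕ) = d - 1 then -f.coeff (i : ℕ) else 0)

section Intertwine

variable {F : Type} [Field F] {f : Polynomial F} [hfact : Fact (Irreducible f)]

theorem companion_column (hmonic : f.Monic) (j0 : Fin f.natDegree) :
    ∑ j : Fin f.natDegree, companion f.natDegree f j j0 • AdjoinRoot.root f ^ (j : ℕ)
      = AdjoinRoot.root f ^ ((j0 : ℕ) + 1) := by
  have hd0 : 0 < f.natDegree := hfact.out.natDegree_pos
  have hsplit : ∀ j : Fin f.natDegree,
      companion f.natDegree f j j0 • AdjoinRoot.root f ^ (j : ℕ)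
      = (if (j : ℕ) = (j0 : ℕ) + 1 then AdjoinRoot.root f ^ (j : ℕ) else 0)
        + (if (j0 : ℕ) = f.natDegree - 1
            then (-f.coeff (j : ℕ)) • AdjoinRoot.root f ^ (j : ℕ) else 0) := by
    intro j
    rw [companion, Matrix.of_apply, add_smul]
    congr 1
    · split <;> simp
    · split <;> simp
  rw [Finset.sum_congr rfl (fun j _ => hsplit j), Finset.sum_add_distrib]
  by_cases hcase : (j0 : ℕ) + 1 < f.natDegree
  · have hne : (j0 : ℕ) ≠ f.natDegree - 1 := by omega
    have h2 : (∑ j : Fin f.natDegree, if (j0 : ℕ) = f.natDegree - 1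
        then (-f.coeff (j : ℕ)) • AdjoinRoot.root f ^ (j : ℕ) else 0) = 0 := by
      refine Finset.sum_eq_zero fun j _ => ?_
      rw [if_neg hne]
    have h1 : (∑ j : Fin f.natDegree, if (j : ℕ) = (j0 : ℕ) + 1
        then AdjoinRoot.root f ^ (j : ℕ) else 0)
        = AdjoinRoot.root f ^ ((j0 : ℕ) + 1) := by
      have heqiff : ∀ j : Fin f.natDegree,
          ((j : ℕ) = (j0 : ℕ) + 1) = (j = ⟨(j0 : ℕ) + 1, hcase⟩) := by
        intro j; rw [eq_iff_iff, Fin.ext_iff]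
      simp only [heqiff]
      rw [Finset.sum_ite_eq' Finset.univ (⟨(j0 : ℕ) + 1, hcase⟩ : Fin f.natDegree)
        (fun j => AdjoinRoot.root f ^ (j : ℕ))]
      simp
    rw [h1, h2, add_zero]
  · have hj0 : (j0 : ℕ) = f.natDegree - 1 := by have := j0.isLt; omega
    have h1 : (∑ j : Fin f.natDegree, if (j : ℕ) = (j0 : ℕ) + 1
        then AdjoinRoot.root f ^ (j : ℕ) else 0) = 0 := by
      refine Finset.sum_eq_zero fun j _ => ?_
      have hne : (j : ℕ) ≠ (j0 : ℕ) + 1 := by have := j.isLt; omega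
      rw [if_neg hne]
    have hd1 : (j0 : ℕ) + 1 = f.natDegree := by omega
    have h2 : (∑ j : Fin f.natDegree, if (j0 : ℕ) = f.natDegree - 1
        then (-f.coeff (j : ℕ)) • AdjoinRoot.root f ^ (j : ℕ) else 0)
        = AdjoinRoot.root f ^ f.natDegree := by
      simp only [if_pos hj0]
      have haev : (0 : AdjoinRoot f) = Polynomial.aeval (AdjoinRoot.root f) f := by
        rw [AdjoinRoot.aeval_eq, AdjoinRoot.mk_self]
      rw [Polynomial.aeval_eq_sum_range' (Nat.lt_succ_self _) (AdjoinRoot.root f)] at haev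
      rw [Finset.sum_range_succ] at haev
      have hcoeff : f.coeff f.natDegree = 1 := hmonic.coeff_natDegree
      rw [hcoeff, one_smul] at haev
      have hfin : (∑ i ∈ Finset.range f.natDegree, f.coeff i • AdjoinRoot.root f ^ i)
          = ∑ j : Fin f.natDegree, f.coeff (j : ℕ) • AdjoinRoot.root f ^ (j : ℕ) := by
        rw [← Fin.sum_univ_eq_sum_range (fun i => f.coeff i • AdjoinRoot.root f ^ i)
          f.natDegree]
      have hneg : ∑ j : Fin f.natDegree, (-f.coeff (j : ℕ)) • AdjoinRoot.root f ^ (j : ℕ)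
          = -∑ j : Fin f.natDegree, f.coeff (j : ℕ) • AdjoinRoot.root f ^ (j : ℕ) := by
        rw [← Finset.sum_neg_distrib]
        exact Finset.sum_congr rfl fun j _ => by rw [neg_smul]
      rw [hneg, ← hfin]
      have hkey : (∑ i ∈ Finset.range f.natDegree, f.coeff i • AdjoinRoot.root f ^ i)
          = -(AdjoinRoot.root f ^ f.natDegree) :=
        eq_neg_of_add_eq_zero_left haev.symm
      rw [hkey, neg_neg]
    rw [h1, h2, zero_add, hd1]

end Intertwine

section Inter2

variable {F : Type} [Field F] {f : Polynomial F} [hfact : Fact (Irreducible f)] {s : ℕ}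

/-- Unpack a long vector into an `s`-tuple of field-extension elements. -/
noncomputable def toKL (f : Polynomial F) [hfact : Fact (Irreducible f)] (s : ℕ) :
    ((Fin f.natDegree × Fin s) → F) →ₗ[F] (Fin s → AdjoinRoot f) where
  toFun v := fun i => ∑ j, v (j, i) • AdjoinRoot.root f ^ (j : ℕ)
  map_add' v w := by
    funext i
    simp [add_smul, Finset.sum_add_distrib]
  map_smul' c v := by
    funext i
    simp [Finset.smul_sum, smul_smul]

theorem toKL_mulVec (hmonic : f.Monic)
    (v : Fin f.natDegree × Fin s → F) :
    toKL f s ((Matrix.blockDiagonal fun _ : Fin s => companion f.natDegree f).mulVec v)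
      = fun i => AdjoinRoot.root f * toKL f s v i := by
  suffices h : ((toKL f s).comp
      (Matrix.mulVecLin (Matrix.blockDiagonal fun _ : Fin s => companion f.natDegree f)))
      = ((LinearMap.pi fun i => (LinearMap.mul F (AdjoinRoot f) (AdjoinRoot.root f)).comp
          (LinearMap.proj i)).comp (toKL f s)) by
    have hv := LinearMap.congr_fun h v
    funext i
    simpa only [LinearMap.comp_apply, Matrix.mulVecLin_apply, LinearMap.pi_apply,
      LinearMap.proj_apply, LinearMap.mul_apply'] using congrFun hv i
  apply (Pi.basisFun F (Fin f.natDegree × Fin s)).ext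
  rintro ⟨j0, i0⟩
  rw [Pi.basisFun_apply]
  funext i
  simp only [LinearMap.comp_apply, Matrix.mulVecLin_apply, LinearMap.pi_apply,
    LinearMap.proj_apply, LinearMap.mul_apply']
  rw [show ∀ (M : Matrix (Fin f.natDegree × Fin s) (Fin f.natDegree × Fin s) F) j,
      M *ᵥ Pi.single j (1 : F) = fun x => M x j * 1 from
    fun M j => by ext x; simp [Matrix.mulVec_single]]
  simp only [toKL, LinearMap.coe_mk, AddHom.coe_mk]
  by_cases hi : i = i0
  · subst hi
    have hL : ∀ j : Fin f.natDegree,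
        ((Matrix.blockDiagonal fun _ : Fin s => companion f.natDegree f) (j, i) (j0, i) * 1)
          • AdjoinRoot.root f ^ (j : ℕ)
        = companion f.natDegree f j j0 • AdjoinRoot.root f ^ (j : ℕ) := by
      intro j
      rw [Matrix.blockDiagonal_apply]
      simp
    rw [Finset.sum_congr rfl fun j _ => hL j, companion_column hmonic j0]
    have hR : ∀ j : Fin f.natDegree,
        (Pi.single (j0, i) (1 : F) : Fin f.natDegree × Fin s → F) (j, i) • AdjoinRoot.root f ^ (j : ℕ)
        = if j = j0 then AdjoinRoot.root f ^ (j : ℕ) else 0 := by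
      intro j
      rw [Pi.single_apply]
      by_cases hj : j = j0
      · subst hj; simp
      · have hne : ((j, i) : Fin f.natDegree × Fin s) ≠ (j0, i) := by
          simp [Prod.ext_iff, hj]
        rw [if_neg hne, if_neg hj, zero_smul]
    rw [Finset.sum_congr rfl fun j _ => hR j,
      Finset.sum_ite_eq' Finset.univ j0 (fun j => AdjoinRoot.root f ^ (j : ℕ))]
    simp [pow_succ, mul_comm]
  · have hL : ∀ j : Fin f.natDegree,
        ((Matrix.blockDiagonal fun _ : Fin s => companion f.natDegree f) (j, i) (j0, i0) * 1)
          • AdjoinRoot.root f ^ (j : ℕ) = 0 := by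
      intro j
      rw [Matrix.blockDiagonal_apply, if_neg hi]
      simp
    have hR : ∀ j : Fin f.natDegree,
        (Pi.single (j0, i0) (1 : F) : Fin f.natDegree × Fin s → F) (j, i) • AdjoinRoot.root f ^ (j : ℕ) = 0 := by
      intro j
      have hne : ((j, i) : Fin f.natDegree × Fin s) ≠ (j0, i0) := by
        simp [Prod.ext_iff, hi]
      rw [Pi.single_apply, if_neg hne, zero_smul]
    rw [Finset.sum_congr rfl fun j _ => hL j, Finset.sum_congr rfl fun j _ => hR j]
    simp

theorem toKL_pow_mulVec (hmonic : f.Monic) (k : ℕ)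
    (v : Fin f.natDegree × Fin s → F) :
    toKL f s (((Matrix.blockDiagonal fun _ : Fin s => companion f.natDegree f) ^ k).mulVec v)
      = fun i => AdjoinRoot.root f ^ k * toKL f s v i := by
  induction k generalizing v with
  | zero => simp [Matrix.one_mulVec]
  | succ k ih =>
      rw [pow_succ', ← Matrix.mulVec_mulVec, toKL_mulVec hmonic, ih]
      funext i
      rw [pow_succ']
      ring

theorem pairing_eq (u w : Fin f.natDegree × Fin s → F) :
    ∑ x, u x * w x
      = lam0 f (∑ i, (∑ j, u (j, i) • BD f j) * (∑ j, w (j, i) • B0 f j)) := by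
  have hexp : ∀ i : Fin s, (∑ j, u (j, i) • BD f j) * (∑ j, w (j, i) • B0 f j)
      = ∑ j, ∑ j', (u (j, i) * w (j', i)) • (BD f j * B0 f j') := by
    intro i
    rw [Finset.sum_mul_sum]
    refine Finset.sum_congr rfl fun j _ => Finset.sum_congr rfl fun j' _ => ?_
    rw [smul_mul_assoc, mul_smul_comm, smul_smul]
  simp only [hexp]
  rw [map_sum]
  have hin : ∀ i : Fin s, lam0 f (∑ j, ∑ j', (u (j, i) * w (j', i)) • (BD f j * B0 f j'))
      = ∑ j, u (j, i) * w (j, i) := by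
    intro i
    rw [map_sum]
    refine Finset.sum_congr rfl fun j _ => ?_
    rw [map_sum]
    have hterm : ∀ j' : Fin f.natDegree,
        lam0 f ((u (j, i) * w (j', i)) • (BD f j * B0 f j'))
          = if j' = j then u (j, i) * w (j', i) else 0 := by
      intro j'
      rw [_root_.map_smul, lam0_BD_mul_B0]
      split <;> simp
    rw [Finset.sum_congr rfl fun j' _ => hterm j',
      Finset.sum_ite_eq' Finset.univ j (fun j' => u (j, i) * w (j', i))]
    simp
  rw [Finset.sum_congr rfl fun i _ => hin i]
  rw [Fintype.sum_prod_type]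
  exact Finset.sum_comm

end Inter2

section MinpolyChar

variable {F : Type} [Field F] {α β : Type} {S : ℕ → Matrix α β F} {f : Polynomial F}

theorem dvd_of_annPoly (hirr : Irreducible f) (hann : AnnPoly f S)
    (hne : ¬ ∀ k, S k = 0) {g : Polynomial F} (hg : AnnPoly g S) : f ∣ g := by
  classical
  have hgcd : EuclideanDomain.gcd f g
      = f * EuclideanDomain.gcdA f g + g * EuclideanDomain.gcdB f g :=
    EuclideanDomain.gcd_eq_gcd_ab f g
  have hmem : AnnPoly (EuclideanDomain.gcd f g) S := by
    rw [hgcd, mul_comm f _, mul_comm g _]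
    exact Ann.annPoly_add (Ann.annPoly_mul _ hann) (Ann.annPoly_mul _ hg)
  obtain ⟨kq, hk⟩ : EuclideanDomain.gcd f g ∣ f := EuclideanDomain.gcd_dvd_left f g
  rcases hirr.isUnit_or_isUnit hk with hu | hu
  · obtain ⟨c, hc, hch⟩ := Polynomial.isUnit_iff.mp hu
    have hc0 : c ≠ 0 := hc.ne_zero
    have := Ann.eq_zero_of_annPoly_C hc0 (by rw [hch]; exact hmem)
    exact absurd this hne
  · have hdg : EuclideanDomain.gcd f g ∣ g := EuclideanDomain.gcd_dvd_right f g
    have hassoc : Associated (EuclideanDomain.gcd f g) f :=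
      ⟨hu.unit, by rw [IsUnit.unit_spec]; exact hk.symm⟩
    exact dvd_trans hassoc.symm.dvd hdg

theorem seqMinpoly_eq_one (h : ∀ k, S k = 0) : seqMinpoly S = 1 := by
  have hex : ∃ p : Polynomial F, p.Monic ∧ AnnPoly p S ∧ ∀ g, AnnPoly g S → p ∣ g :=
    ⟨1, monic_one, (Ann.annPoly_one_iff).mpr h, fun g _ => one_dvd g⟩
  rw [seqMinpoly, dif_pos hex]
  obtain ⟨hm, hann, hdvd⟩ := hex.choose_spec
  have h1 : hex.choose ∣ 1 := hdvd 1 ((Ann.annPoly_one_iff).mpr h)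
  exact hm.eq_one_of_isUnit (isUnit_of_dvd_one h1)

theorem seqMinpoly_eq_irr (hmonic : f.Monic) (hirr : Irreducible f)
    (hann : AnnPoly f S) (hne : ¬ ∀ k, S k = 0) : seqMinpoly S = f := by
  have hdvdall : ∀ g, AnnPoly g S → f ∣ g := fun g hg =>
    dvd_of_annPoly hirr hann hne hg
  have hex : ∃ p : Polynomial F, p.Monic ∧ AnnPoly p S ∧ ∀ g, AnnPoly g S → p ∣ g :=
    ⟨f, hmonic, hann, hdvdall⟩
  rw [seqMinpoly, dif_pos hex]
  obtain ⟨hm, hann', hdvd⟩ := hex.choose_spec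
  exact Polynomial.eq_of_monic_of_associated hm hmonic
    (associated_of_dvd_dvd (hdvd f hann) (hdvdall _ hann'))

theorem seqMinpoly_eq_irr_iff (hmonic : f.Monic) (hirr : Irreducible f)
    (hann : AnnPoly f S) : seqMinpoly S = f ↔ ¬ ∀ k, S k = 0 := by
  constructor
  · intro h hzero
    rw [seqMinpoly_eq_one hzero] at h
    exact hirr.ne_one h.symm
  · exact seqMinpoly_eq_irr hmonic hirr hann

end MinpolyChar


section Assembly

variable {F : Type} [Field F] {f : Polynomial F} [hfact : Fact (Irreducible f)] {b s : ℕ}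

theorem toKL_injective : Function.Injective (toKL (F := F) f s) := by
  intro v v' h
  funext x
  have h1 := congrArg (fun w => (B0 f).repr (w x.2) x.1) h
  simp only [toKL, LinearMap.coe_mk, AddHom.coe_mk] at h1
  have key : ∀ (v : Fin f.natDegree × Fin s → F),
      (B0 f).repr (∑ j, v (j, x.2) • AdjoinRoot.root f ^ (j : ℕ)) x.1 = v (x.1, x.2) := by
    intro v
    have hB : ∀ j : Fin f.natDegree, v (j, x.2) • AdjoinRoot.root f ^ (j : ℕ)
        = v (j, x.2) • B0 f j := by
      intro j; rw [B0_apply]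
    rw [Finset.sum_congr rfl fun j _ => hB j, ← Module.Basis.equivFun_symm_apply,
      ← Module.Basis.equivFun_apply, LinearEquiv.apply_symm_apply]
  rw [key v, key v'] at h1
  exact (Prod.mk.eta (p := x)) ▸ h1

theorem matrix_eq_zero_of_mulVec {n m : Type} [Fintype m] [DecidableEq m]
    {M : Matrix n m F} (h : ∀ v, M.mulVec v = 0) : M = 0 := by
  ext x y
  have := congrFun (h (Pi.single y 1)) x
  rw [Matrix.mulVec_single] at this
  simpa using this

theorem sum_mulVec' {ι n m : Type} [Fintype m] (t : Finset ι)
    (M : ι → Matrix n m F) (v : m → F) :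
    (∑ i ∈ t, M i).mulVec v = ∑ i ∈ t, (M i).mulVec v := by
  classical
  induction t using Finset.induction with
  | empty => simp [Matrix.zero_mulVec]
  | insert _ _ h ih => rw [Finset.sum_insert h, Finset.sum_insert h, Matrix.add_mulVec, ih]

theorem aeval_root_zero : (Polynomial.aeval (AdjoinRoot.root f)) f = 0 := by
  rw [AdjoinRoot.aeval_eq, AdjoinRoot.mk_self]

/-- `f` annihilates the sequence of powers of the block-diagonal companion matrix. -/
theorem annPoly_f_pow (hmonic : f.Monic) :
    AnnPoly f (fun k => (Matrix.blockDiagonal fun _ : Fin s => companion f.natDegree f) ^ k) := by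
  rw [Ann.annPoly_iff_range (Nat.lt_succ_self _)]
  intro k
  apply matrix_eq_zero_of_mulVec
  intro v
  rw [sum_mulVec']
  apply toKL_injective (s := s)
  rw [map_sum, map_zero]
  funext i0
  rw [Finset.sum_apply]
  have hterm : ∀ i ∈ Finset.range (f.natDegree + 1),
      toKL f s ((f.coeff i • (Matrix.blockDiagonal fun _ : Fin s
        => companion f.natDegree f) ^ (i + k)).mulVec v) i0
      = (f.coeff i • AdjoinRoot.root f ^ i)
          * (AdjoinRoot.root f ^ k * toKL f s v i0) := by
    intro i _
    rw [Matrix.smul_mulVec, _root_.map_smul]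
    have := congrFun (toKL_pow_mulVec (s := s) hmonic (i + k) v) i0
    rw [Pi.smul_apply, this, smul_mul_assoc, pow_add, mul_assoc]
  rw [Finset.sum_congr rfl hterm, ← Finset.sum_mul]
  have hval : (∑ i ∈ Finset.range (f.natDegree + 1),
      f.coeff i • AdjoinRoot.root f ^ i) = 0 := by
    rw [← Polynomial.aeval_eq_sum_range' (Nat.lt_succ_self _) (AdjoinRoot.root f),
      aeval_root_zero]
  rw [hval, zero_mul]
  simp

end Assembly


section Entries

variable {F : Type} [Field F] {f : Polynomial F} [hfact : Fact (Irreducible f)] {b s : ℕ}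

theorem entry_formula (hmonic : f.Monic) (U : Matrix (Fin b) (Fin f.natDegree × Fin s) F)
    (V : Matrix (Fin f.natDegree × Fin s) (Fin b) F) (k : ℕ) (a c : Fin b) :
    (U * (Matrix.blockDiagonal fun _ : Fin s => companion f.natDegree f) ^ k * V) a c
      = lam0 f (AdjoinRoot.root f ^ k * ((packU (BD f) U) * (packV (B0 f) V)) a c) := by
  have hmul : (U * (Matrix.blockDiagonal fun _ : Fin s => companion f.natDegree f) ^ k * V) a c
      = ∑ x, U a x * (((Matrix.blockDiagonal fun _ : Fin s
          => companion f.natDegree f) ^ k).mulVec (fun y => V y c)) x := by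
    rw [Matrix.mul_assoc, Matrix.mul_apply]
    refine Finset.sum_congr rfl fun x _ => ?_
    rw [Matrix.mul_apply, Matrix.mulVec]
    rfl
  rw [hmul, pairing_eq (u := U a)]
  have hrw : ∀ i : Fin s,
      (∑ j, (((Matrix.blockDiagonal fun _ : Fin s => companion f.natDegree f) ^ k).mulVec
          (fun y => V y c)) (j, i) • B0 f j)
      = AdjoinRoot.root f ^ k * packV (B0 f) V i c := by
    intro i
    have hB : ∀ j : Fin f.natDegree,
        (((Matrix.blockDiagonal fun _ : Fin s => companion f.natDegree f) ^ k).mulVec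
          (fun y => V y c)) (j, i) • B0 f j
        = (((Matrix.blockDiagonal fun _ : Fin s => companion f.natDegree f) ^ k).mulVec
          (fun y => V y c)) (j, i) • AdjoinRoot.root f ^ (j : ℕ) := by
      intro j; rw [B0_apply]
    rw [Finset.sum_congr rfl fun j _ => hB j]
    have := congrFun (toKL_pow_mulVec (s := s) hmonic k (fun y => V y c)) i
    simp only [toKL, LinearMap.coe_mk, AddHom.coe_mk] at this
    rw [this]
    congr 1
    rw [packV, Matrix.of_apply]
    refine Finset.sum_congr rfl fun j _ => ?_
    rw [B0_apply]
  rw [Finset.sum_congr rfl fun i _ => by rw [hrw i]]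
  congr 1
  rw [Matrix.mul_apply, Finset.mul_sum]
  refine Finset.sum_congr rfl fun i _ => ?_
  rw [packU, Matrix.of_apply]
  ring

theorem bad_iff (hmonic : f.Monic) (U : Matrix (Fin b) (Fin f.natDegree × Fin s) F)
    (V : Matrix (Fin f.natDegree × Fin s) (Fin b) F) :
    (∀ k : ℕ, U * (Matrix.blockDiagonal fun _ : Fin s => companion f.natDegree f) ^ k * V = 0)
      ↔ (packU (BD f) U) * (packV (B0 f) V) = 0 := by
  constructor
  · intro h
    ext a c
    apply eq_zero_of_lam0_pow_mul (f := f)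
    intro k
    have := congrFun (congrFun (h k) a) c
    rw [entry_formula hmonic U V k a c] at this
    simpa using this
  · intro h k
    ext a c
    rw [entry_formula hmonic U V k a c, h]
    simp

theorem annPoly_f_proj (hmonic : f.Monic) (U : Matrix (Fin b) (Fin f.natDegree × Fin s) F)
    (V : Matrix (Fin f.natDegree × Fin s) (Fin b) F) :
    AnnPoly f (fun k => U * (Matrix.blockDiagonal fun _ : Fin s
      => companion f.natDegree f) ^ k * V) := by
  have hA := annPoly_f_pow (s := s) hmonic
  rw [Ann.annPoly_iff_range (Nat.lt_succ_self _)] at hA ⊢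
  intro k
  have : ∀ i ∈ Finset.range (f.natDegree + 1),
      f.coeff i • (U * (Matrix.blockDiagonal fun _ : Fin s
        => companion f.natDegree f) ^ (i + k) * V)
      = U * (f.coeff i • (Matrix.blockDiagonal fun _ : Fin s
        => companion f.natDegree f) ^ (i + k)) * V := by
    intro i _
    rw [Matrix.mul_smul, Matrix.smul_mul]
  rw [Finset.sum_congr rfl this, ← Matrix.sum_mul, ← Matrix.mul_sum, hA k]
  simp

end Entries


section Counting

theorem sum_vecMulVec {K : Type} [CommRing K] {b s : ℕ}
    (P : Matrix (Fin b) (Fin s) K) (Q : Matrix (Fin s) (Fin b) K) :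
    ∑ i : Fin s, Matrix.vecMulVec (fun a => P a i) (fun c => Q i c) = P * Q := by
  ext a c
  rw [Matrix.sum_apply, Matrix.mul_apply]
  exact Finset.sum_congr rfl fun i _ => by rw [Matrix.vecMulVec_apply]

/-- Matrix pairs with `P * Q = 0` correspond to outer-product tuples summing to zero. -/
noncomputable def outerEquiv (K : Type) [CommRing K] (b s : ℕ) :
    {PQ : Matrix (Fin b) (Fin s) K × Matrix (Fin s) (Fin b) K // PQ.1 * PQ.2 = 0}
      ≃ {w : Fin s → (Fin b → K) × (Fin b → K) //
          ∑ i : Fin s, Matrix.vecMulVec (w i).1 (w i).2 = 0} where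
  toFun PQ := ⟨fun i => (fun a => PQ.1.1 a i, fun c => PQ.1.2 i c), by
    rw [sum_vecMulVec]; exact PQ.2⟩
  invFun w := ⟨(Matrix.of fun a i => (w.1 i).1 a, Matrix.of fun i c => (w.1 i).2 c), by
    have := w.2
    rw [← sum_vecMulVec (Matrix.of fun a i => (w.1 i).1 a) (Matrix.of fun i c => (w.1 i).2 c)]
    exact this⟩
  left_inv PQ := rfl
  right_inv w := rfl

theorem mapped_sum_eq {K K' : Type} [CommRing K] [CommRing K'] (e : K ≃+* K') {b t : ℕ}
    (w : Fin t → (Fin b → K) × (Fin b → K)) (a c : Fin b) :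
    (∑ i : Fin t, Matrix.vecMulVec (fun a' => e ((w i).1 a')) (fun c' => e ((w i).2 c'))) a c
      = e ((∑ i : Fin t, Matrix.vecMulVec (w i).1 (w i).2) a c) := by
  rw [Matrix.sum_apply, Matrix.sum_apply, map_sum]
  exact Finset.sum_congr rfl fun i _ => by
    rw [Matrix.vecMulVec_apply, Matrix.vecMulVec_apply, _root_.map_mul]

theorem mapped_sum_zero {K K' : Type} [CommRing K] [CommRing K'] (e : K ≃+* K') {b t : ℕ}
    (w : Fin t → (Fin b → K) × (Fin b → K))
    (h : ∑ i : Fin t, Matrix.vecMulVec (w i).1 (w i).2 = 0) :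
    ∑ i : Fin t, Matrix.vecMulVec
      (fun a' => e ((w i).1 a')) (fun c' => e ((w i).2 c')) = 0 := by
  ext a c
  rw [mapped_sum_eq e w a c, h]
  simp

/-- Transport the zero-outer-product condition along a ring isomorphism. -/
noncomputable def wEquiv {K K' : Type} [CommRing K] [CommRing K'] (e : K ≃+* K') (b t : ℕ) :
    {w : Fin t → (Fin b → K) × (Fin b → K) //
        ∑ i : Fin t, Matrix.vecMulVec (w i).1 (w i).2 = 0}
      ≃ {w : Fin t → (Fin b → K') × (Fin b → K') //
        ∑ i : Fin t, Matrix.vecMulVec (w i).1 (w i).2 = 0} where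
  toFun w := ⟨fun i => (fun a => e ((w.1 i).1 a), fun c => e ((w.1 i).2 c)),
    mapped_sum_zero e w.1 w.2⟩
  invFun w := ⟨fun i => (fun a => e.symm ((w.1 i).1 a), fun c => e.symm ((w.1 i).2 c)),
    mapped_sum_zero e.symm w.1 w.2⟩
  left_inv w := by
    apply Subtype.ext
    funext i
    refine Prod.ext ?_ ?_ <;> funext x <;> simp
  right_inv w := by
    apply Subtype.ext
    funext i
    refine Prod.ext ?_ ?_ <;> funext x <;> simp

end Counting


section Ineq

variable {K : Type} [Field K] [Fintype K] {b m : ℕ}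

omit [Fintype K] in
theorem vecMulVec_zero_right (u : Fin b → K) :
    Matrix.vecMulVec u (0 : Fin b → K) = 0 := by
  ext a c
  rw [Matrix.vecMulVec_apply]
  simp

theorem numer_le :
    Nat.card {w : Fin (m + 1) → (Fin b → K) × (Fin b → K) //
        ∑ i : Fin (m + 1), Matrix.vecMulVec (w i).1 (w i).2 = 0}
      ≤ Nat.card {uv : (Fin b → K) × (Fin b → K) // Matrix.vecMulVec uv.1 uv.2 = 0}
        * Nat.card (Fin m → (Fin b → K) × (Fin b → K)) := by
  classical
  rw [← Nat.card_prod]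
  apply Nat.card_le_card_of_injective
    (f := fun w : {w : Fin (m + 1) → (Fin b → K) × (Fin b → K) //
        ∑ i : Fin (m + 1), Matrix.vecMulVec (w i).1 (w i).2 = 0} =>
      ((if h : Matrix.vecMulVec (w.1 0).1 (w.1 0).2 = 0
          then ⟨w.1 0, h⟩
          else ⟨((w.1 0).1, 0), vecMulVec_zero_right _⟩ :
            {uv : (Fin b → K) × (Fin b → K) // Matrix.vecMulVec uv.1 uv.2 = 0}),
        fun i : Fin m => w.1 i.succ))
  intro w w' heq
  have htail : ∀ i : Fin m, w.1 i.succ = w'.1 i.succ := by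
    intro i
    exact congrFun (congrArg Prod.snd heq) i
  have hM : Matrix.vecMulVec (w.1 0).1 (w.1 0).2 = Matrix.vecMulVec (w'.1 0).1 (w'.1 0).2 := by
    have h1 := w.2
    have h2 := w'.2
    rw [Fin.sum_univ_succ] at h1 h2
    have hts : (∑ i : Fin m, Matrix.vecMulVec (w.1 i.succ).1 (w.1 i.succ).2)
        = ∑ i : Fin m, Matrix.vecMulVec (w'.1 i.succ).1 (w'.1 i.succ).2 :=
      Finset.sum_congr rfl fun i _ => by rw [htail i]
    have e1 : Matrix.vecMulVec (w.1 0).1 (w.1 0).2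
        = -∑ i : Fin m, Matrix.vecMulVec (w.1 i.succ).1 (w.1 i.succ).2 :=
      eq_neg_of_add_eq_zero_left h1
    have e2 : Matrix.vecMulVec (w'.1 0).1 (w'.1 0).2
        = -∑ i : Fin m, Matrix.vecMulVec (w'.1 i.succ).1 (w'.1 i.succ).2 :=
      eq_neg_of_add_eq_zero_left h2
    rw [e1, e2, hts]
  have hfst := congrArg Prod.fst heq
  dsimp only at hfst
  have hzero : w.1 0 = w'.1 0 := by
    by_cases hc : Matrix.vecMulVec (w.1 0).1 (w.1 0).2 = 0
    · have hc' : Matrix.vecMulVec (w'.1 0).1 (w'.1 0).2 = 0 := by rw [← hM]; exact hc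
      rw [dif_pos hc, dif_pos hc'] at hfst
      exact Subtype.ext_iff.mp hfst
    · have hc' : ¬ Matrix.vecMulVec (w'.1 0).1 (w'.1 0).2 = 0 := by rw [← hM]; exact hc
      rw [dif_neg hc, dif_neg hc'] at hfst
      have hval := Subtype.ext_iff.mp hfst
      have hu : (w.1 0).1 = (w'.1 0).1 := by
        have := congrArg Prod.fst hval
        simpa using this
      have hune : (w.1 0).1 ≠ 0 := by
        intro h0
        apply hc
        ext a c
        rw [Matrix.vecMulVec_apply, h0]
        simp
      obtain ⟨a, ha⟩ : ∃ a, (w.1 0).1 a ≠ 0 := by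
        by_contra hno
        push_neg at hno
        exact hune (funext hno)
      have hv : (w.1 0).2 = (w'.1 0).2 := by
        funext c
        have := congrFun (congrFun hM a) c
        rw [Matrix.vecMulVec_apply, Matrix.vecMulVec_apply, ← hu] at this
        exact mul_left_cancel₀ ha this
      exact Prod.ext hu hv
  apply Subtype.ext
  funext i
  refine Fin.cases ?_ ?_ i
  · exact hzero
  · exact htail

end Ineq


section Cards

theorem nat_card_matrix (F m n : Type) [Fintype F] [Fintype m] [Fintype n]
    [DecidableEq m] [DecidableEq n] :
    Nat.card (Matrix m n F) = Fintype.card F ^ (Fintype.card m * Fintype.card n) := by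
  rw [Nat.card_eq_fintype_card]
  show Fintype.card (m → n → F) = _
  rw [Fintype.card_fun, Fintype.card_fun, ← pow_mul, mul_comm]

theorem nat_card_tuples (K : Type) [Fintype K] (b t : ℕ) :
    Nat.card (Fin t → (Fin b → K) × (Fin b → K)) = Fintype.card K ^ (2 * b * t) := by
  rw [Nat.card_eq_fintype_card, Fintype.card_fun, Fintype.card_prod, Fintype.card_fun,
    Fintype.card_fin, Fintype.card_fin, ← pow_add, ← pow_mul]
  congr 1
  ring

end Cards


/-- `Q_{Q,b,t}(0)`: the fraction of tuples `(u₁, v₁, …, u_t, v_t)` of vectors in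
`K^b` (`K` the field of `Q` elements) whose sum of outer products `∑ᵢ uᵢvᵢᵀ` is the
zero matrix. -/
noncomputable def Qzero (K : Type) [Field K] [Fintype K] (b t : ℕ) : ℚ :=
  (Nat.card {w : Fin t → (Fin b → K) × (Fin b → K) //
      ∑ i : Fin t, Matrix.vecMulVec (w i).1 (w i).2 = 0} : ℚ) /
    (Fintype.card K : ℚ) ^ (2 * b * t)


/-- For `A = ⊕_{i=1}^s C_f` with `f` monic irreducible of degree `d` over `F_q`:
`P(A) = 1 - Q_{q^d,b,s}(0) ≥ 1 - Q_{q^d,b,1}(0)`, where `K` is the field with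
`q^d` elements. -/
theorem stmt17 (F : Type) [Field F] [Fintype F] (b s : ℕ) (hb : 0 < b) (hs : 0 < s)
    (f : Polynomial F) (hmonic : f.Monic) (hirr : Irreducible f)
    (d : ℕ) (hd : d = f.natDegree)
    (K : Type) [Field K] [Fintype K] (hK : Fintype.card K = Fintype.card F ^ d) :
    pmp F b (Matrix.blockDiagonal fun _ : Fin s => companion d f) = 1 - Qzero K b s ∧
    1 - Qzero K b 1 ≤
      pmp F b (Matrix.blockDiagonal fun _ : Fin s => companion d f) := by
  classical
  subst hd
  haveI hfact : Fact (Irreducible f) := ⟨hirr⟩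
  obtain ⟨m, rfl⟩ : ∃ m, s = m + 1 := ⟨s - 1, by omega⟩
  have hd0 : 0 < f.natDegree := hirr.natDegree_pos
  set A := Matrix.blockDiagonal fun _ : Fin (m + 1) => companion f.natDegree f with hA
  -- `seqMinpoly` of the power sequence is `f`
  have hApow : seqMinpoly (fun k => A ^ k) = f := by
    apply seqMinpoly_eq_irr hmonic hirr (annPoly_f_pow hmonic)
    intro hz
    have h0 := hz 0
    rw [pow_zero] at h0
    have h1 := congrFun (congrFun h0 ((⟨0, hd0⟩ : Fin f.natDegree), (0 : Fin (m + 1))))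
      ((⟨0, hd0⟩ : Fin f.natDegree), (0 : Fin (m + 1)))
    rw [Matrix.one_apply_eq] at h1
    simpa using h1
  have hiff : ∀ UV : Matrix (Fin b) (Fin f.natDegree × Fin (m + 1)) F
      × Matrix (Fin f.natDegree × Fin (m + 1)) (Fin b) F,
      (seqMinpoly (fun k => UV.1 * A ^ k * UV.2) = seqMinpoly (fun k => A ^ k))
        ↔ ¬ ∀ k, UV.1 * A ^ k * UV.2 = 0 := by
    intro UV
    rw [hApow]
    exact seqMinpoly_eq_irr_iff hmonic hirr (annPoly_f_proj hmonic UV.1 UV.2)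
  have hcards : Fintype.card (AdjoinRoot f) = Fintype.card K := by
    rw [card_adjoinRoot, hK]
  let e : AdjoinRoot f ≃+* K := FiniteField.ringEquivOfCardEq hcards
  -- the count of "bad" pairs equals the `Qzero` numerator
  have hbad : Nat.card {UV : Matrix (Fin b) (Fin f.natDegree × Fin (m + 1)) F
        × Matrix (Fin f.natDegree × Fin (m + 1)) (Fin b) F //
        ∀ k, UV.1 * A ^ k * UV.2 = 0}
      = Nat.card {w : Fin (m + 1) → (Fin b → K) × (Fin b → K) //
        ∑ i : Fin (m + 1), Matrix.vecMulVec (w i).1 (w i).2 = 0} := by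
    refine Nat.card_congr (Equiv.trans ?_
      (Equiv.trans (outerEquiv (AdjoinRoot f) b (m + 1)) (wEquiv e b (m + 1))))
    exact Equiv.subtypeEquiv
      (Equiv.prodCongr (Equiv.ofBijective _ (packU_bijective (BD f)))
        (Equiv.ofBijective _ (packV_bijective (B0 f))))
      (fun UV => bad_iff hmonic UV.1 UV.2)
  -- total count
  have hT : Nat.card (Matrix (Fin b) (Fin f.natDegree × Fin (m + 1)) F
        × Matrix (Fin f.natDegree × Fin (m + 1)) (Fin b) F)
      = Fintype.card K ^ (2 * b * (m + 1)) := by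
    rw [Nat.card_prod, nat_card_matrix, nat_card_matrix, hK,
      Fintype.card_fin, Fintype.card_prod, Fintype.card_fin, Fintype.card_fin,
      ← pow_add, ← pow_mul]
    congr 1
    ring
  -- good count
  have hgood : Nat.card {UV : Matrix (Fin b) (Fin f.natDegree × Fin (m + 1)) F
        × Matrix (Fin f.natDegree × Fin (m + 1)) (Fin b) F //
        seqMinpoly (fun k => UV.1 * A ^ k * UV.2) = seqMinpoly (fun k => A ^ k)}
      = Fintype.card K ^ (2 * b * (m + 1))
        - Nat.card {UV : Matrix (Fin b) (Fin f.natDegree × Fin (m + 1)) F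
          × Matrix (Fin f.natDegree × Fin (m + 1)) (Fin b) F //
          ∀ k, UV.1 * A ^ k * UV.2 = 0} := by
    rw [Nat.card_congr (Equiv.subtypeEquivRight hiff), ← hT,
      Nat.card_eq_fintype_card, Nat.card_eq_fintype_card, Nat.card_eq_fintype_card]
    exact Fintype.card_subtype_compl _
  have hle : Nat.card {UV : Matrix (Fin b) (Fin f.natDegree × Fin (m + 1)) F
        × Matrix (Fin f.natDegree × Fin (m + 1)) (Fin b) F //
        ∀ k, UV.1 * A ^ k * UV.2 = 0}
      ≤ Fintype.card K ^ (2 * b * (m + 1)) := by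
    rw [← hT]
    exact Nat.card_le_card_of_injective Subtype.val Subtype.val_injective
  have hKQpos : (0 : ℚ) < (Fintype.card K : ℚ) := by
    exact_mod_cast Fintype.card_pos
  have heq : pmp F b A = 1 - Qzero K b (m + 1) := by
    rw [pmp, Qzero, hgood, hbad, hT]
    rw [Nat.cast_sub (hbad ▸ hle)]
    rw [Nat.cast_pow]
    have hpow_pos : (0 : ℚ) < (Fintype.card K : ℚ) ^ (2 * b * (m + 1)) :=
      pow_pos hKQpos _
    rw [sub_div, div_self (ne_of_gt hpow_pos)]
  refine ⟨heq, ?_⟩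
  rw [heq]
  apply sub_le_sub_left
  -- Qzero monotonicity
  have hone : Nat.card {w : Fin 1 → (Fin b → K) × (Fin b → K) //
        ∑ i : Fin 1, Matrix.vecMulVec (w i).1 (w i).2 = 0}
      = Nat.card {uv : (Fin b → K) × (Fin b → K) //
        Matrix.vecMulVec uv.1 uv.2 = 0} := by
    refine Nat.card_congr (Equiv.subtypeEquiv (Equiv.funUnique (Fin 1) _) fun w => ?_)
    rw [Fin.sum_univ_one]
    constructor <;> intro h <;> exact h
  have hnum := numer_le (K := K) (b := b) (m := m)
  rw [nat_card_tuples] at hnum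
  rw [Qzero, Qzero, hone]
  have hsplit : (Fintype.card K : ℚ) ^ (2 * b * (m + 1))
      = (Fintype.card K : ℚ) ^ (2 * b * 1) * (Fintype.card K : ℚ) ^ (2 * b * m) := by
    rw [← pow_add]
    congr 1
    ring
  rw [hsplit]
  have hden1 : (0 : ℚ) < (Fintype.card K : ℚ) ^ (2 * b * 1) := pow_pos hKQpos _
  have hdenm : (0 : ℚ) < (Fintype.card K : ℚ) ^ (2 * b * m) := pow_pos hKQpos _
  rw [div_le_div_iff₀ (by positivity) hden1]
  have hnumQ : (Nat.card {w : Fin (m + 1) → (Fin b → K) × (Fin b → K) //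
        ∑ i : Fin (m + 1), Matrix.vecMulVec (w i).1 (w i).2 = 0} : ℚ)
      ≤ (Nat.card {uv : (Fin b → K) × (Fin b → K) //
        Matrix.vecMulVec uv.1 uv.2 = 0} : ℚ) * (Fintype.card K : ℚ) ^ (2 * b * m) := by
    have := hnum
    exact_mod_cast this
  nlinarith [mul_le_mul_of_nonneg_right hnumQ (le_of_lt hden1)]
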